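/- There is an absolute constant C > 0 such that the following holds for every real ε ∈ (0, 1/2] and every integer t ≥ 1. If n ≥ 2^{C·t/ε^{16}}, then every 2-edge-colouring of the complete graph K_n that is locally ε-balanced contains four pairwise disjoint t-element vertex sets A₁, A₂, A₃, A₄ such that all edges between A₁ and A₂ and all edges between A₃ and A₄ are red, while all edges between A₂ and A₃ and all edges between A₄ and A₁ are blue (a t-blow-up of an alternating 4-cycle). -/

import Mathlib

open Finset

set_option maxHeartbeats 1600000

namespace Stmt15Aux


variable {n : ℕ} (col : Fin n → Fin n → Bool)

def Rs (v : Fin n) : Finset (Fin n) := univ.filter fun u => u ≠ v ∧ col v u = true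
def Bs (v : Fin n) : Finset (Fin n) := univ.filter fun u => u ≠ v ∧ col v u = false

lemma mem_Rs {v u : Fin n} : u ∈ Rs col v ↔ u ≠ v ∧ col v u = true := by
  simp [Rs]

lemma mem_Bs {v u : Fin n} : u ∈ Bs col v ↔ u ≠ v ∧ col v u = false := by
  simp [Bs]

lemma cover {x y : Fin n} (h : x ≠ y) : x ∈ Rs col y ∨ x ∈ Bs col y := by
  rcases Bool.eq_false_or_eq_true (col y x) with hb | hb
  · exact Or.inl ((mem_Rs col).2 ⟨h, hb⟩)
  · exact Or.inr ((mem_Bs col).2 ⟨h, hb⟩)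

lemma not_mem_Rs_self (v : Fin n) : v ∉ Rs col v := by
  simp [mem_Rs]

lemma not_mem_Bs_self (v : Fin n) : v ∉ Bs col v := by
  simp [mem_Bs]

lemma Rs_Bs_disj {v x : Fin n} (h1 : x ∈ Rs col v) (h2 : x ∈ Bs col v) : False := by
  rw [mem_Rs] at h1
  rw [mem_Bs] at h2
  rw [h1.2] at h2
  exact Bool.noConfusion h2.2

lemma card_filter_real {α : Type*} (p : α → Prop) [DecidablePred p] (s : Finset α) :
    ((s.filter p).card : ℝ) = ∑ a ∈ s, if p a then (1:ℝ) else 0 := by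
  rw [card_filter]
  push_cast
  rfl

lemma exists_good (ε : ℝ) (hε : 0 < ε) (hε1 : ε ≤ 1)
    (hsym : ∀ u v, col u v = col v u)
    (hbal : ∀ v, ε*n ≤ ((Rs col v).card:ℝ) ∧ ε*n ≤ ((Bs col v).card:ℝ))
    (hn8 : (8:ℝ) ≤ ε^2*n) :
    ∃ G : Finset (Fin n × Fin n),
      (∀ p ∈ G, ε^2/4*n ≤ (((Rs col p.1) ∩ (Bs col p.2)).card:ℝ)
        ∧ ε^2/4*n ≤ (((Bs col p.1) ∩ (Rs col p.2)).card:ℝ)) ∧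
      ε^4/32*(n:ℝ)^2 ≤ (G.card : ℝ) := by
  classical
  have hn0 : 0 < n := by
    rcases Nat.eq_zero_or_pos n with h | h
    · subst h
      norm_num at hn8
    · exact h
  have hn0R : (0:ℝ) < n := by exact_mod_cast hn0
  set γ : ℝ := ε^2/4 with hγ
  set Good : Fin n × Fin n → Prop := fun p =>
    γ*n ≤ (((Rs col p.1) ∩ (Bs col p.2)).card:ℝ)
      ∧ γ*n ≤ (((Bs col p.1) ∩ (Rs col p.2)).card:ℝ) with hGood
  refine ⟨(univ ×ˢ univ).filter Good, fun p hp => (mem_filter.1 hp).2, ?_⟩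
  by_contra hlt
  push_neg at hlt
  set g : Fin n → ℕ := fun v => (univ.filter (fun c => Good (v, c))).card with hg
  have hGcardN : ((univ ×ˢ univ).filter Good).card = ∑ v : Fin n, g v := by
    rw [card_filter, Finset.sum_product]
    exact Finset.sum_congr rfl (fun a _ => (card_filter _ _).symm)
  have hGcard : ((((univ ×ˢ univ).filter Good).card : ℝ)) = ∑ v : Fin n, (g v : ℝ) := by
    rw [hGcardN]
    push_cast
    rfl
  set S : Finset (Fin n) := univ.filter (fun v => (g v : ℝ) ≤ ε^2*n/8) with hS
  have hScomp : ((univ \ S).card : ℝ) < ε^2*n/4 := by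
    have h1 : ∀ v ∈ univ \ S, ε^2*(n:ℝ)/8 < (g v : ℝ) := by
      intro v hv
      rw [mem_sdiff, hS, mem_filter] at hv
      have := hv.2
      push_neg at this
      exact this (mem_univ v)
    have h2 : (ε^2*n/8) * ((univ \ S).card:ℝ) ≤ ∑ v ∈ univ \ S, (g v:ℝ) := by
      calc (ε^2*n/8) * ((univ \ S).card:ℝ) = ∑ _v ∈ univ \ S, ε^2*n/8 := by
            rw [Finset.sum_const, nsmul_eq_mul]; ring
        _ ≤ ∑ v ∈ univ \ S, (g v:ℝ) := Finset.sum_le_sum (fun v hv => (h1 v hv).le)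
    have h3 : ∑ v ∈ univ \ S, (g v:ℝ) ≤ ∑ v : Fin n, (g v:ℝ) :=
      Finset.sum_le_sum_of_subset_of_nonneg (sdiff_subset)
        (fun i _ _ => by positivity)
    have h4 : (∑ v : Fin n, (g v:ℝ)) < ε^4/32*(n:ℝ)^2 := by
      rw [← hGcard]; exact hlt
    have hpos : (0:ℝ) < ε^2*(n:ℝ)/8 := by positivity
    have h5 : (ε^2*n/8) * ((univ \ S).card:ℝ) < (ε^2*n/8) * (ε^2*n/4) := by nlinarith
    exact lt_of_mul_lt_mul_left h5 hpos.le
  have hSne : S.Nonempty := by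
    rw [← Finset.card_pos]
    by_contra h
    push_neg at h
    have hSc : S.card = 0 := Nat.le_zero.mp h
    have hcard : (univ \ S).card = n := by
      rw [Finset.card_sdiff_of_subset (subset_univ S), card_univ, Fintype.card_fin, hSc, Nat.sub_zero]
    rw [hcard] at hScomp
    have he1 : ε^2 ≤ 1 := by nlinarith
    nlinarith [mul_le_mul_of_nonneg_right he1 hn0R.le]
  obtain ⟨u, huS, humin⟩ := S.exists_min_image (fun v => (Rs col v).card) hSne
  set T : ℝ := ∑ x ∈ Rs col u, ((univ.filter (fun y => y ≠ x ∧ x ∉ Rs col y)).card : ℝ)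
    with hT
  -- lower bound for T
  have hTlow : ε^2*(n:ℝ)^2 ≤ T := by
    have hx : ∀ x ∈ Rs col u,
        ε*(n:ℝ) ≤ ((univ.filter (fun y => y ≠ x ∧ x ∉ Rs col y)).card:ℝ) := by
      intro x _
      refine le_trans (hbal x).2 ?_
      have hsub : Bs col x ⊆ univ.filter (fun y => y ≠ x ∧ x ∉ Rs col y) := by
        intro y hy
        rw [mem_Bs] at hy
        refine mem_filter.2 ⟨mem_univ _, hy.1, ?_⟩
        intro hxr
        rw [mem_Rs] at hxr
        have hcontra : (false : Bool) = true := by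
          rw [← hy.2, hsym x y, hxr.2]
        exact Bool.noConfusion hcontra
      exact_mod_cast card_le_card hsub
    calc ε^2*(n:ℝ)^2 = (ε*n)*(ε*n) := by ring
      _ ≤ (ε*n)*((Rs col u).card:ℝ) :=
          mul_le_mul_of_nonneg_left (hbal u).1 (by positivity)
      _ = ∑ _x ∈ Rs col u, (ε*(n:ℝ)) := by
          rw [Finset.sum_const, nsmul_eq_mul]; ring
      _ ≤ T := Finset.sum_le_sum hx
  -- swap the double sum
  have hswap : T = ∑ y : Fin n,
      (((Rs col u).filter (fun x => y ≠ x ∧ x ∉ Rs col y)).card : ℝ) := by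
    rw [hT]
    have e1 : ∀ x ∈ Rs col u,
        ((univ.filter (fun y => y ≠ x ∧ x ∉ Rs col y)).card : ℝ)
          = ∑ y : Fin n, (if y ≠ x ∧ x ∉ Rs col y then (1:ℝ) else 0) :=
      fun x _ => card_filter_real _ _
    rw [Finset.sum_congr rfl e1, Finset.sum_comm]
    exact Finset.sum_congr rfl (fun y _ => (card_filter_real _ _).symm)
  set c : Fin n → ℝ :=
    fun y => (((Rs col u).filter (fun x => y ≠ x ∧ x ∉ Rs col y)).card : ℝ) with hc
  have hcnn : ∀ y, 0 ≤ c y := fun y => by positivity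
  have hcn : ∀ y, c y ≤ n := by
    intro y
    have : ((Rs col u).filter (fun x => y ≠ x ∧ x ∉ Rs col y)).card ≤ n := by
      calc ((Rs col u).filter (fun x => y ≠ x ∧ x ∉ Rs col y)).card
          ≤ (Rs col u).card := card_le_card (filter_subset _ _)
        _ ≤ (univ : Finset (Fin n)).card := card_le_card (subset_univ _)
        _ = n := by rw [card_univ, Fintype.card_fin]
    calc c y = (((Rs col u).filter (fun x => y ≠ x ∧ x ∉ Rs col y)).card : ℝ) := by
          simp only [hc]
      _ ≤ (n:ℝ) := by exact_mod_cast this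
  have hcbad : ∀ y ∈ S, ¬ Good (u, y) → c y ≤ γ*n + 1 := by
    intro y hyS hng
    rw [hGood] at hng
    rw [not_and_or] at hng
    rcases hng with h1 | h1
    · push_neg at h1
      have hsub : (Rs col u).filter (fun x => y ≠ x ∧ x ∉ Rs col y)
          ⊆ Rs col u ∩ Bs col y := by
        intro x hx
        rw [mem_filter] at hx
        refine mem_inter.2 ⟨hx.1, ?_⟩
        rcases cover col (Ne.symm hx.2.1) with h | h
        · exact absurd h hx.2.2
        · exact h
      have := card_le_card hsub
      have h2 : (c y) ≤ ((Rs col u ∩ Bs col y).card : ℝ) := by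
        simp only [hc]; exact_mod_cast this
      simp only at h1
      linarith
    · push_neg at h1
      have hmin : (Rs col u).card ≤ (Rs col y).card := humin y hyS
      have hsub1 : (Rs col u).filter (fun x => y ≠ x ∧ x ∉ Rs col y)
          ⊆ Rs col u \ Rs col y := by
        intro x hx
        rw [mem_filter] at hx
        exact mem_sdiff.2 ⟨hx.1, hx.2.2⟩
      have e1 : (Rs col u \ Rs col y).card ≤ (Rs col y \ Rs col u).card := by
        have a1 := Finset.card_inter_add_card_sdiff (Rs col u) (Rs col y)
        have a2 := Finset.card_inter_add_card_sdiff (Rs col y) (Rs col u)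
        rw [Finset.inter_comm] at a2
        omega
      have hsub2 : Rs col y \ Rs col u ⊆ insert u (Bs col u ∩ Rs col y) := by
        intro x hx
        rw [mem_sdiff] at hx
        by_cases hxu : x = u
        · rw [hxu]; exact mem_insert_self _ _
        · refine mem_insert_of_mem (mem_inter.2 ⟨?_, hx.1⟩)
          rcases cover col hxu with h | h
          · exact absurd h hx.2
          · exact h
      have e2 : (Rs col y \ Rs col u).card ≤ (Bs col u ∩ Rs col y).card + 1 :=
        le_trans (card_le_card hsub2) (card_insert_le _ _)
      have e3 : ((Rs col u).filter (fun x => y ≠ x ∧ x ∉ Rs col y)).card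
          ≤ (Bs col u ∩ Rs col y).card + 1 :=
        le_trans (card_le_card hsub1) (le_trans e1 e2)
      have e4 : c y ≤ ((Bs col u ∩ Rs col y).card : ℝ) + 1 := by
        simp only [hc]; exact_mod_cast e3
      simp only at h1
      linarith
  -- upper bound for T
  have hsplit1 : (∑ y ∈ univ \ S, c y) + (∑ y ∈ S, c y) = ∑ y : Fin n, c y :=
    Finset.sum_sdiff (subset_univ S)
  have hb1 : ∑ y ∈ univ \ S, c y ≤ ((univ \ S).card : ℝ) * n := by
    calc ∑ y ∈ univ \ S, c y ≤ ∑ _y ∈ univ \ S, (n:ℝ) :=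
          Finset.sum_le_sum (fun y _ => hcn y)
      _ = ((univ \ S).card : ℝ) * n := by rw [Finset.sum_const, nsmul_eq_mul]
  have hsplit2 : (∑ y ∈ S.filter (fun y => Good (u,y)), c y)
      + (∑ y ∈ S.filter (fun y => ¬ Good (u,y)), c y) = ∑ y ∈ S, c y :=
    Finset.sum_filter_add_sum_filter_not S _ c
  have hb2 : ∑ y ∈ S.filter (fun y => Good (u,y)), c y ≤ (ε^2*n/8) * n := by
    have hcard1 : ((S.filter (fun y => Good (u,y))).card : ℝ) ≤ ε^2*n/8 := by
      have hsubG : S.filter (fun y => Good (u,y)) ⊆ univ.filter (fun y => Good (u,y)) :=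
        filter_subset_filter _ (subset_univ S)
      have : ((S.filter (fun y => Good (u,y))).card : ℝ) ≤ (g u : ℝ) := by
        exact_mod_cast card_le_card hsubG
      refine le_trans this ?_
      rw [hS, mem_filter] at huS
      exact huS.2
    calc ∑ y ∈ S.filter (fun y => Good (u,y)), c y
        ≤ ∑ _y ∈ S.filter (fun y => Good (u,y)), (n:ℝ) :=
          Finset.sum_le_sum (fun y _ => hcn y)
      _ = ((S.filter (fun y => Good (u,y))).card : ℝ) * n := by
          rw [Finset.sum_const, nsmul_eq_mul]
      _ ≤ (ε^2*n/8) * n := mul_le_mul_of_nonneg_right hcard1 hn0R.le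
  have hb3 : ∑ y ∈ S.filter (fun y => ¬ Good (u,y)), c y ≤ (n:ℝ) * (γ*n + 1) := by
    have hγnn : (0:ℝ) ≤ γ*n + 1 := by
      have : (0:ℝ) ≤ γ := by rw [hγ]; positivity
      nlinarith
    calc ∑ y ∈ S.filter (fun y => ¬ Good (u,y)), c y
        ≤ ∑ _y ∈ S.filter (fun y => ¬ Good (u,y)), (γ*n+1) :=
          Finset.sum_le_sum (fun y hy => by
            rw [mem_filter] at hy
            exact hcbad y hy.1 hy.2)
      _ = ((S.filter (fun y => ¬ Good (u,y))).card : ℝ) * (γ*n+1) := by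
          rw [Finset.sum_const, nsmul_eq_mul]
      _ ≤ (n:ℝ) * (γ*n+1) := by
          refine mul_le_mul_of_nonneg_right ?_ hγnn
          have : (S.filter (fun y => ¬ Good (u,y))).card ≤ n := by
            calc (S.filter (fun y => ¬ Good (u,y))).card
                ≤ (univ : Finset (Fin n)).card :=
                  card_le_card (subset_univ _)
              _ = n := by rw [card_univ, Fintype.card_fin]
          exact_mod_cast this
  have hTup : T ≤ (ε^2*n/4) * n + (ε^2*n/8) * n + (n:ℝ) * (γ*n + 1) := by
    rw [hswap]
    have : ∑ y : Fin n, c y ≤ ((univ \ S).card : ℝ) * n + (ε^2*n/8) * n + (n:ℝ)*(γ*n+1) := by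
      rw [← hsplit1, ← hsplit2]
      linarith
    refine le_trans this ?_
    have h6 := mul_le_mul_of_nonneg_right hScomp.le hn0R.le
    linarith
  rw [hγ] at hTup
  linarith [hTlow, hTup, mul_le_mul_of_nonneg_right hn8 hn0R.le, hn0R]


lemma numeric (ε : ℝ) (hε : 0 < ε) (hε2 : ε ≤ 1/2) (t : ℕ) (ht : 1 ≤ t) :
    128*(t:ℝ)*ε⁻¹^4*(8*ε⁻¹^2)^(2*t) ≤ (2:ℝ)^((100:ℝ)*t/ε^16) := by
  set y : ℝ := ε⁻¹ with hydef
  have hy : (2:ℝ) ≤ y := by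
    have := inv_anti₀ hε hε2
    norm_num at this
    simpa [hydef] using this
  have hy0 : (0:ℝ) < y := lt_of_lt_of_le (by norm_num) hy
  have hy1 : (1:ℝ) ≤ y := le_trans (by norm_num) hy
  -- the key rpow bound
  have h16 : (16384*y^8 : ℝ) ≤ (2:ℝ)^((100:ℝ)*y^16) := by
    have hlog2 : (1/2 : ℝ) ≤ Real.log 2 := by
      have := Real.log_two_gt_d9; linarith
    have hL : Real.logb 2 y ≤ 2*y := by
      have h1 : Real.log y ≤ y := le_trans (Real.log_le_sub_one_of_pos hy0) (by linarith)
      have h2 : (Real.log 2)⁻¹ ≤ 2 := by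
        rw [inv_le_comm₀ (by linarith) (by norm_num)]
        linarith
      have h3 : 0 ≤ Real.log y := Real.log_nonneg hy1
      calc Real.logb 2 y = Real.log y * (Real.log 2)⁻¹ := by
            rw [Real.logb, div_eq_mul_inv]
        _ ≤ y * 2 := mul_le_mul h1 h2 (by positivity) (by linarith)
        _ = 2*y := by ring
    have hyL : y = (2:ℝ)^(Real.logb 2 y) := (Real.rpow_logb two_pos (by norm_num) hy0).symm
    have hy8 : y^8 ≤ (2:ℝ)^((16:ℝ)*y) := by
      calc y^8 = ((2:ℝ)^(Real.logb 2 y))^(8:ℕ) := by rw [← hyL]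
        _ = (2:ℝ)^(Real.logb 2 y * (8:ℕ)) := by
            rw [← Real.rpow_natCast ((2:ℝ)^(Real.logb 2 y)) 8,
              ← Real.rpow_mul (by norm_num : (0:ℝ) ≤ 2)]
        _ ≤ (2:ℝ)^((16:ℝ)*y) := by
            apply Real.rpow_le_rpow_of_exponent_le (by norm_num)
            push_cast
            nlinarith [hL, hy0]
    have hy16 : y ≤ y^16 := le_self_pow₀ hy1 (by norm_num)
    calc (16384*y^8 : ℝ) = (2:ℝ)^((14:ℝ)) * y^8 := by
          rw [show ((14:ℝ)) = ((14:ℕ):ℝ) by norm_num, Real.rpow_natCast]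
          norm_num
      _ ≤ (2:ℝ)^((14:ℝ)) * (2:ℝ)^((16:ℝ)*y) := by
          apply mul_le_mul_of_nonneg_left hy8 (by positivity)
      _ = (2:ℝ)^((14:ℝ) + 16*y) := by rw [← Real.rpow_add (by norm_num)]
      _ ≤ (2:ℝ)^((100:ℝ)*y^16) := by
          apply Real.rpow_le_rpow_of_exponent_le (by norm_num)
          nlinarith [hy16, hy]
  have ht2 : (t:ℝ) ≤ (2:ℝ)^t := by
    have := Nat.lt_two_pow_self (n := t)
    exact_mod_cast this.le
  calc 128*(t:ℝ)*y^4*(8*y^2)^(2*t)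
      ≤ 128*(2:ℝ)^t*y^4*(8*y^2)^(2*t) := by
        have h8 : (0:ℝ) ≤ (8*y^2)^(2*t) := by positivity
        have h4 : (0:ℝ) ≤ y^4 := by positivity
        nlinarith [mul_le_mul_of_nonneg_right ht2 (mul_nonneg h4 h8)]
    _ = (128*y^4)^(t+1) := by
        have e1 : ((8*y^2):ℝ)^(2*t) = (64*y^4)^t := by
          rw [pow_mul, show ((8*y^2)^2:ℝ) = 64*y^4 from by ring]
        have e3 : ((128*y^4):ℝ)^t = 2^t * (64*y^4)^t := by
          rw [show (128*y^4:ℝ) = 2*(64*y^4) from by ring, mul_pow]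
        rw [e1, pow_succ (128*y^4) t, e3]
        ring
    _ ≤ (128*y^4)^(2*t) := by
        have hy4 : (1:ℝ) ≤ y^4 := by
          have := pow_le_pow_left₀ (by norm_num : (0:ℝ) ≤ 1) hy1 4
          simpa using this
        apply pow_le_pow_right₀ (by nlinarith) (by omega)
    _ = (16384*y^8)^t := by
        rw [pow_mul, show ((128*y^4)^2:ℝ) = 16384*y^8 from by ring]
    _ ≤ ((2:ℝ)^((100:ℝ)*y^16))^t := pow_le_pow_left₀ (by positivity) h16 t
    _ = (2:ℝ)^((100:ℝ)*t/ε^16) := by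
        rw [← Real.rpow_natCast ((2:ℝ)^((100:ℝ)*y^16)) t,
          ← Real.rpow_mul (by norm_num : (0:ℝ) ≤ 2)]
        congr 1
        rw [hydef, inv_pow, div_eq_mul_inv]
        ring


lemma choose_ratio (n k t : ℕ) : n.choose t * (k+1-t)^t ≤ k.choose t * n^t := by
  have h1 : (k+1-t)^t ≤ k.descFactorial t := Nat.pow_sub_le_descFactorial k t
  have h2 : n.descFactorial t ≤ n^t := Nat.descFactorial_le_pow n t
  have key : t.factorial * (n.choose t * (k+1-t)^t) ≤ t.factorial * (k.choose t * n^t) := by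
    calc t.factorial * (n.choose t * (k+1-t)^t) = n.descFactorial t * (k+1-t)^t := by
          rw [Nat.descFactorial_eq_factorial_mul_choose]; ring
      _ ≤ n^t * k.descFactorial t := Nat.mul_le_mul h2 h1
      _ = t.factorial * (k.choose t * n^t) := by
          rw [Nat.descFactorial_eq_factorial_mul_choose]; ring
  exact Nat.le_of_mul_le_mul_left key (Nat.factorial_pos t)

lemma count_sub {α : Type*} [DecidableEq α] [Fintype α] (t : ℕ) (W : Finset α) :
    ∑ B ∈ powersetCard t (univ : Finset α), (if B ⊆ W then (1:ℕ) else 0)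
      = W.card.choose t := by
  classical
  rw [← card_filter]
  have h : (powersetCard t (univ : Finset α)).filter (fun B => B ⊆ W)
      = powersetCard t W := by
    ext B
    simp only [Finset.mem_filter, Finset.mem_powersetCard, Finset.subset_univ, true_and]
    tauto
  rw [h, card_powersetCard]

lemma bigsum (t : ℕ) :
    ∑ B ∈ powersetCard t (univ : Finset (Fin n)),
      ∑ D ∈ powersetCard t (univ : Finset (Fin n)),
      ((univ.filter (fun a => B ⊆ Rs col a ∧ D ⊆ Bs col a)).card
        * (univ.filter (fun c => B ⊆ Bs col c ∧ D ⊆ Rs col c)).card)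
    = ∑ a : Fin n, ∑ c : Fin n,
        ((Rs col a ∩ Bs col c).card.choose t) * ((Bs col a ∩ Rs col c).card.choose t) := by
  classical
  set K := powersetCard t (univ : Finset (Fin n)) with hK
  calc ∑ B ∈ K, ∑ D ∈ K,
        ((univ.filter (fun a => B ⊆ Rs col a ∧ D ⊆ Bs col a)).card
          * (univ.filter (fun c => B ⊆ Bs col c ∧ D ⊆ Rs col c)).card)
      = ∑ B ∈ K, ∑ D ∈ K, ∑ a : Fin n, ∑ c : Fin n,
          ((if B ⊆ Rs col a ∧ D ⊆ Bs col a then (1:ℕ) else 0)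
            * (if B ⊆ Bs col c ∧ D ⊆ Rs col c then (1:ℕ) else 0)) := by
        refine sum_congr rfl fun B _ => sum_congr rfl fun D _ => ?_
        rw [card_filter, card_filter, Finset.sum_mul_sum]
    _ = ∑ B ∈ K, ∑ a : Fin n, ∑ D ∈ K, ∑ c : Fin n,
          ((if B ⊆ Rs col a ∧ D ⊆ Bs col a then (1:ℕ) else 0)
            * (if B ⊆ Bs col c ∧ D ⊆ Rs col c then (1:ℕ) else 0)) :=
        sum_congr rfl fun B _ => Finset.sum_comm
    _ = ∑ a : Fin n, ∑ B ∈ K, ∑ D ∈ K, ∑ c : Fin n,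
          ((if B ⊆ Rs col a ∧ D ⊆ Bs col a then (1:ℕ) else 0)
            * (if B ⊆ Bs col c ∧ D ⊆ Rs col c then (1:ℕ) else 0)) :=
        Finset.sum_comm
    _ = ∑ a : Fin n, ∑ B ∈ K, ∑ c : Fin n, ∑ D ∈ K,
          ((if B ⊆ Rs col a ∧ D ⊆ Bs col a then (1:ℕ) else 0)
            * (if B ⊆ Bs col c ∧ D ⊆ Rs col c then (1:ℕ) else 0)) :=
        sum_congr rfl fun a _ => sum_congr rfl fun B _ => Finset.sum_comm
    _ = ∑ a : Fin n, ∑ c : Fin n, ∑ B ∈ K, ∑ D ∈ K,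
          ((if B ⊆ Rs col a ∧ D ⊆ Bs col a then (1:ℕ) else 0)
            * (if B ⊆ Bs col c ∧ D ⊆ Rs col c then (1:ℕ) else 0)) :=
        sum_congr rfl fun a _ => Finset.sum_comm
    _ = ∑ a : Fin n, ∑ c : Fin n,
        ((Rs col a ∩ Bs col c).card.choose t) * ((Bs col a ∩ Rs col c).card.choose t) := by
        refine sum_congr rfl fun a _ => sum_congr rfl fun c _ => ?_
        rw [← count_sub t (Rs col a ∩ Bs col c), ← count_sub t (Bs col a ∩ Rs col c),
          Finset.sum_mul_sum]
        refine sum_congr rfl fun B _ => sum_congr rfl fun D _ => ?_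
        by_cases h1 : B ⊆ Rs col a <;> by_cases h2 : D ⊆ Bs col a <;>
          by_cases h3 : B ⊆ Bs col c <;> by_cases h4 : D ⊆ Rs col c <;>
          simp [h1, h2, h3, h4, Finset.subset_inter_iff]


end Stmt15Aux

open Stmt15Aux

/-- the abstract's assertion: a locally ε-balanced 2-colouring of K_n with
n ≥ 2^{Ct/ε¹⁶} contains a t-blow-up of an alternating 4-cycle. Colour `true` is red,
`false` is blue. -/
theorem stmt_15 :
    ∃ C : ℝ, 0 < C ∧
      ∀ (ε : ℝ), 0 < ε → ε ≤ 1/2 →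
      ∀ (t : ℕ), 1 ≤ t →
      ∀ (n : ℕ) (col : Fin n → Fin n → Bool),
        (2 : ℝ) ^ (C * t / ε ^ 16) ≤ (n : ℝ) →
        (∀ u v, col u v = col v u) →
        (∀ v : Fin n,
          ε * n ≤ ((univ.filter fun u => u ≠ v ∧ col v u = true).card : ℝ) ∧
          ε * n ≤ ((univ.filter fun u => u ≠ v ∧ col v u = false).card : ℝ)) →
        ∃ A₁ A₂ A₃ A₄ : Finset (Fin n),
          Disjoint A₁ A₂ ∧ Disjoint A₁ A₃ ∧ Disjoint A₁ A₄ ∧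
          Disjoint A₂ A₃ ∧ Disjoint A₂ A₄ ∧ Disjoint A₃ A₄ ∧
          A₁.card = t ∧ A₂.card = t ∧ A₃.card = t ∧ A₄.card = t ∧
          (∀ u ∈ A₁, ∀ v ∈ A₂, col u v = true) ∧
          (∀ u ∈ A₃, ∀ v ∈ A₄, col u v = true) ∧
          (∀ u ∈ A₂, ∀ v ∈ A₃, col u v = false) ∧
          (∀ u ∈ A₄, ∀ v ∈ A₁, col u v = false) := by
  classical
  refine ⟨100, by norm_num, ?_⟩
  intro ε hε hε2 t ht n col hn hsym hbal
  have hε1 : ε ≤ 1 := by linarith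
  set y : ℝ := ε⁻¹ with hydef
  have hyε : ε * y = 1 := mul_inv_cancel₀ hε.ne'
  have hy : (2:ℝ) ≤ y := by
    rw [hydef]
    have h := inv_anti₀ hε hε2
    norm_num at h
    exact h
  have hy1 : (1:ℝ) ≤ y := by linarith
  have hy0 : (0:ℝ) < y := by linarith
  have key : 128*(t:ℝ)*y^4*(8*y^2)^(2*t) ≤ (n:ℝ) := by
    refine le_trans ?_ hn
    rw [hydef]
    exact numeric ε hε hε2 t ht
  have htR : (1:ℝ) ≤ (t:ℝ) := by exact_mod_cast ht
  have hy2 : (1:ℝ) ≤ y^2 := by nlinarith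
  have hpow1 : (1:ℝ) ≤ (8*y^2)^(2*t) := by
    calc (1:ℝ) = 1^(2*t) := (one_pow _).symm
      _ ≤ (8*y^2)^(2*t) := pow_le_pow_left₀ (by norm_num) (by nlinarith) _
  have hkeyn : 8*(t:ℝ)*y^2 ≤ (n:ℝ) := by
    have h1 : 8*(t:ℝ)*y^2 ≤ 128*(t:ℝ)*y^4 := by
      have h16 : (0:ℝ) ≤ 16*y^2-1 := by nlinarith
      have hprod : (0:ℝ) ≤ (8*(t:ℝ)*y^2)*(16*y^2-1) :=
        mul_nonneg (by positivity) h16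
      nlinarith
    have h2 : 128*(t:ℝ)*y^4 ≤ 128*(t:ℝ)*y^4*(8*y^2)^(2*t) := by
      nlinarith [mul_le_mul_of_nonneg_left hpow1
        (show (0:ℝ) ≤ 128*(t:ℝ)*y^4 by positivity)]
    linarith
  have ht8 : (t:ℝ) ≤ ε^2*(n:ℝ)/8 := by
    have h := mul_le_mul_of_nonneg_left hkeyn (le_of_lt (pow_pos hε 2))
    have e : ε^2*(8*(t:ℝ)*y^2) = 8*(t:ℝ) := by
      calc ε^2*(8*(t:ℝ)*y^2) = 8*(t:ℝ)*((ε*y)^2) := by ring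
        _ = 8*(t:ℝ) := by rw [hyε]; norm_num
    rw [e] at h
    linarith
  have hn8 : (8:ℝ) ≤ ε^2*n := by nlinarith
  have hn0R : (0:ℝ) < n := by nlinarith [sq_nonneg ε]
  have hn0 : 0 < n := by exact_mod_cast hn0R
  -- get the good pairs
  obtain ⟨G, hGgood, hGcard⟩ := exists_good col ε hε hε1 hsym (fun v => hbal v) hn8
  -- the threshold k
  set k : ℕ := ⌈ε^2/4*(n:ℝ)⌉₊ with hkdef
  have hkγ : ε^2/4*(n:ℝ) ≤ (k:ℝ) := Nat.le_ceil _
  have htk : t ≤ k := by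
    have h : (t:ℝ) ≤ (k:ℝ) := by nlinarith
    exact_mod_cast h
  set m : ℕ := k + 1 - t with hmdef
  have hk1 : ε^2*(n:ℝ)/8 ≤ (m:ℝ) := by
    have hle : t ≤ k+1 := le_trans htk (Nat.le_succ k)
    rw [hmdef]
    rw [Nat.cast_sub hle]
    push_cast
    linarith
  have hm0 : (0:ℝ) < (m:ℝ) := lt_of_lt_of_le (by positivity) hk1
  have htn : t ≤ n := by
    have h : (t:ℝ) ≤ (n:ℝ) := by nlinarith
    exact_mod_cast h
  set K := powersetCard t (univ : Finset (Fin n)) with hKdef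
  have hKcard : K.card = n.choose t := by
    rw [hKdef, card_powersetCard, card_univ, Fintype.card_fin]
  have hKne : K.Nonempty := by
    obtain ⟨B0, hB0sub, hB0card⟩ := Finset.exists_subset_card_eq
      (show t ≤ (univ : Finset (Fin n)).card by
        rw [card_univ, Fintype.card_fin]; exact htn)
    exact ⟨B0, Finset.mem_powersetCard.2 ⟨hB0sub, hB0card⟩⟩
  -- natural-number lower bound for the choose-sum
  have hlowN : G.card * (k.choose t)^2 ≤ ∑ a : Fin n, ∑ c : Fin n,
      ((Rs col a ∩ Bs col c).card.choose t) * ((Bs col a ∩ Rs col c).card.choose t) := by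
    have hsub : G ⊆ univ ×ˢ univ := by
      rw [Finset.univ_product_univ]; exact subset_univ G
    calc G.card * (k.choose t)^2 = ∑ _p ∈ G, (k.choose t)^2 := by
          rw [Finset.sum_const, smul_eq_mul]
      _ ≤ ∑ p ∈ G, ((Rs col p.1 ∩ Bs col p.2).card.choose t)
            * ((Bs col p.1 ∩ Rs col p.2).card.choose t) := by
          refine Finset.sum_le_sum fun p hp => ?_
          obtain ⟨h1, h2⟩ := hGgood p hp
          have hk1' : k ≤ (Rs col p.1 ∩ Bs col p.2).card := Nat.ceil_le.2 h1
          have hk2' : k ≤ (Bs col p.1 ∩ Rs col p.2).card := Nat.ceil_le.2 h2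
          rw [pow_two]
          exact Nat.mul_le_mul (Nat.choose_le_choose t hk1') (Nat.choose_le_choose t hk2')
      _ ≤ ∑ p ∈ univ ×ˢ univ, ((Rs col p.1 ∩ Bs col p.2).card.choose t)
            * ((Bs col p.1 ∩ Rs col p.2).card.choose t) :=
          Finset.sum_le_sum_of_subset hsub
      _ = ∑ a : Fin n, ∑ c : Fin n, ((Rs col a ∩ Bs col c).card.choose t)
            * ((Bs col a ∩ Rs col c).card.choose t) := Finset.sum_product _ _ _
  -- main real estimate
  have hA : (n.choose t:ℝ) * (m:ℝ)^t ≤ (k.choose t:ℝ) * (n:ℝ)^t := by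
    have h := choose_ratio n k t
    rw [hmdef]
    exact_mod_cast h
  have hsqA : ((n.choose t:ℝ) * (m:ℝ)^t)^2 ≤ ((k.choose t:ℝ) * (n:ℝ)^t)^2 :=
    pow_le_pow_left₀ (by positivity) hA 2
  have e1 : ((8*y^2)^(2*t)) * ((ε^2/8)^(2*t)) = (1:ℝ) := by
    rw [← mul_pow]
    have e0 : (8*y^2) * (ε^2/8) = (1:ℝ) := by
      calc (8*y^2) * (ε^2/8) = (ε*y)^2 := by ring
        _ = 1 := by rw [hyε]; norm_num
    rw [e0, one_pow]
  have h4t : 4*(t:ℝ) ≤ (n:ℝ)*(ε^4/32*(ε^2/8)^(2*t)) := by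
    have hmul := mul_le_mul_of_nonneg_right key
      (show (0:ℝ) ≤ ε^4/32*(ε^2/8)^(2*t) by positivity)
    have e3 : 128*(t:ℝ)*y^4*(8*y^2)^(2*t) * (ε^4/32*(ε^2/8)^(2*t)) = 4*(t:ℝ) := by
      have e2 : y^4*ε^4 = (1:ℝ) := by
        calc y^4*ε^4 = (ε*y)^4 := by ring
          _ = 1 := by rw [hyε]; norm_num
      calc 128*(t:ℝ)*y^4*(8*y^2)^(2*t) * (ε^4/32*(ε^2/8)^(2*t))
          = (y^4*ε^4) * (((8*y^2)^(2*t)) * ((ε^2/8)^(2*t))) * (4*(t:ℝ)) := by ring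
        _ = 4*(t:ℝ) := by rw [e1, e2]; ring
    rw [e3] at hmul
    exact hmul
  have epow : (ε^2/8)^(2*t)*((n:ℝ)^t)^2 = ((ε^2*n/8)^t)^2 := by
    rw [mul_comm 2 t, pow_mul, ← mul_pow, ← mul_pow,
      show (ε^2/8)*(n:ℝ) = ε^2*n/8 from by ring]
  have hm2 : ((ε^2*n/8)^t)^2 ≤ ((m:ℝ)^t)^2 :=
    pow_le_pow_left₀ (by positivity) (pow_le_pow_left₀ (by positivity) hk1 t) 2
  have hB2 : 4*(t:ℝ)*n*((n:ℝ)^t)^2 ≤ (G.card:ℝ)*((m:ℝ)^t)^2 := by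
    have hstep := mul_le_mul_of_nonneg_right h4t
      (show (0:ℝ) ≤ (n:ℝ)*((n:ℝ)^t)^2 by positivity)
    calc 4*(t:ℝ)*n*((n:ℝ)^t)^2 = 4*(t:ℝ) * ((n:ℝ)*((n:ℝ)^t)^2) := by ring
      _ ≤ ((n:ℝ)*(ε^4/32*(ε^2/8)^(2*t))) * ((n:ℝ)*((n:ℝ)^t)^2) := hstep
      _ = (ε^4/32*(n:ℝ)^2)*((ε^2/8)^(2*t)*((n:ℝ)^t)^2) := by ring
      _ = (ε^4/32*(n:ℝ)^2)*(((ε^2*n/8)^t)^2) := by rw [epow]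
      _ ≤ (G.card:ℝ)*((m:ℝ)^t)^2 := by
          refine mul_le_mul ?_ hm2 (by positivity) (by positivity)
          exact hGcard
  have hmain : 4*(t:ℝ)*n*((n.choose t:ℝ))^2 ≤ (G.card:ℝ)*((k.choose t:ℝ))^2 := by
    have hC := mul_le_mul hB2 hsqA (by positivity) (by positivity)
    have hpos : (0:ℝ) < ((m:ℝ)^t)^2*((n:ℝ)^t)^2 :=
      mul_pos (pow_pos (pow_pos hm0 t) 2) (pow_pos (pow_pos hn0R t) 2)
    refine le_of_mul_le_mul_right ?_ hpos
    calc 4*(t:ℝ)*n*((n.choose t:ℝ))^2*(((m:ℝ)^t)^2*((n:ℝ)^t)^2)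
        = (4*(t:ℝ)*n*((n:ℝ)^t)^2) * (((n.choose t:ℝ) * (m:ℝ)^t)^2) := by ring
      _ ≤ ((G.card:ℝ)*((m:ℝ)^t)^2) * (((k.choose t:ℝ) * (n:ℝ)^t)^2) := hC
      _ = (G.card:ℝ)*((k.choose t:ℝ))^2*(((m:ℝ)^t)^2*((n:ℝ)^t)^2) := by ring
  -- pigeonhole over pairs (B, D)
  have hsum : ∑ _p ∈ K ×ˢ K, (4*(t:ℝ)*n) ≤ ∑ p ∈ K ×ˢ K,
      (((univ.filter (fun a => p.1 ⊆ Rs col a ∧ p.2 ⊆ Bs col a)).card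
        * (univ.filter (fun c => p.1 ⊆ Bs col c ∧ p.2 ⊆ Rs col c)).card : ℕ) : ℝ) := by
    have lhs_eq : ∑ _p ∈ K ×ˢ K, (4*(t:ℝ)*n) = ((n.choose t:ℝ))^2*(4*(t:ℝ)*n) := by
      rw [Finset.sum_const, Finset.card_product, hKcard, nsmul_eq_mul]
      push_cast
      ring
    have rhs_eq : (∑ p ∈ K ×ˢ K,
        (((univ.filter (fun a => p.1 ⊆ Rs col a ∧ p.2 ⊆ Bs col a)).card
          * (univ.filter (fun c => p.1 ⊆ Bs col c ∧ p.2 ⊆ Rs col c)).card : ℕ) : ℝ))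
        = ((∑ a : Fin n, ∑ c : Fin n, ((Rs col a ∩ Bs col c).card.choose t)
            * ((Bs col a ∩ Rs col c).card.choose t) : ℕ) : ℝ) := by
      rw [← Nat.cast_sum]
      congr 1
      rw [Finset.sum_product]
      exact bigsum col t
    rw [lhs_eq, rhs_eq]
    calc ((n.choose t:ℝ))^2*(4*(t:ℝ)*n) = 4*(t:ℝ)*n*((n.choose t:ℝ))^2 := by ring
      _ ≤ (G.card:ℝ)*((k.choose t:ℝ))^2 := hmain
      _ = ((G.card * (k.choose t)^2 : ℕ) : ℝ) := by push_cast; ring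
      _ ≤ _ := by exact_mod_cast hlowN
  obtain ⟨p, hpmem, hple⟩ := Finset.exists_le_of_sum_le (hKne.product hKne) hsum
  obtain ⟨B, D⟩ := p
  rw [Finset.mem_product] at hpmem
  have hBcard : B.card = t := (Finset.mem_powersetCard.1 hpmem.1).2
  have hDcard : D.card = t := (Finset.mem_powersetCard.1 hpmem.2).2
  set X := univ.filter (fun a => B ⊆ Rs col a ∧ D ⊆ Bs col a) with hXdef
  set Z := univ.filter (fun c => B ⊆ Bs col c ∧ D ⊆ Rs col c) with hZdef
  have hXZ : 4*t*n ≤ X.card * Z.card := by exact_mod_cast hple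
  have hXn : X.card ≤ n := by
    calc X.card ≤ (univ : Finset (Fin n)).card := card_le_card (subset_univ _)
      _ = n := by rw [card_univ, Fintype.card_fin]
  have hZn : Z.card ≤ n := by
    calc Z.card ≤ (univ : Finset (Fin n)).card := card_le_card (subset_univ _)
      _ = n := by rw [card_univ, Fintype.card_fin]
  have hXt : t ≤ X.card := by
    have h1 : (4*t)*n ≤ X.card * n :=
      le_trans hXZ (Nat.mul_le_mul_left _ hZn)
    have h2 : 4*t ≤ X.card := Nat.le_of_mul_le_mul_right
      (by rw [mul_comm X.card n, mul_comm (4*t) n] at h1 ⊢; exact h1) hn0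
    omega
  have hZt : t ≤ Z.card := by
    have h1 : (4*t)*n ≤ Z.card * n := by
      calc (4*t)*n ≤ X.card * Z.card := hXZ
        _ ≤ n * Z.card := Nat.mul_le_mul_right _ hXn
        _ = Z.card * n := Nat.mul_comm _ _
    have h2 : 4*t ≤ Z.card := Nat.le_of_mul_le_mul_right
      (by rw [mul_comm Z.card n, mul_comm (4*t) n] at h1 ⊢; exact h1) hn0
    omega
  obtain ⟨A₁, hA₁sub, hA₁card⟩ := Finset.exists_subset_card_eq hXt
  obtain ⟨A₃, hA₃sub, hA₃card⟩ := Finset.exists_subset_card_eq hZt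
  have hXm : ∀ a' ∈ X, B ⊆ Rs col a' ∧ D ⊆ Bs col a' := fun a' ha' => by
    rw [hXdef, mem_filter] at ha'
    exact ha'.2
  have hZm : ∀ c' ∈ Z, B ⊆ Bs col c' ∧ D ⊆ Rs col c' := fun c' hc' => by
    rw [hZdef, mem_filter] at hc'
    exact hc'.2
  obtain ⟨b₀, hb₀⟩ : B.Nonempty := card_pos.1 (by rw [hBcard]; omega)
  obtain ⟨a₀, ha₀⟩ : A₁.Nonempty := card_pos.1 (by rw [hA₁card]; omega)
  -- disjointness
  have d12 : Disjoint A₁ B := by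
    rw [Finset.disjoint_left]
    intro a ha haB
    have h := (hXm a (hA₁sub ha)).1 haB
    rw [mem_Rs] at h
    exact h.1 rfl
  have d13 : Disjoint A₁ A₃ := by
    rw [Finset.disjoint_left]
    intro a ha ha3
    have h1 := (hXm a (hA₁sub ha)).1 hb₀
    have h2 := (hZm a (hA₃sub ha3)).1 hb₀
    exact Rs_Bs_disj col h1 h2
  have d14 : Disjoint A₁ D := by
    rw [Finset.disjoint_left]
    intro a ha haD
    have h := (hXm a (hA₁sub ha)).2 haD
    rw [mem_Bs] at h
    exact h.1 rfl
  have d23 : Disjoint B A₃ := by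
    rw [Finset.disjoint_left]
    intro c hcB hc3
    have h := (hZm c (hA₃sub hc3)).1 hcB
    rw [mem_Bs] at h
    exact h.1 rfl
  have d24 : Disjoint B D := by
    rw [Finset.disjoint_left]
    intro x hxB hxD
    have h1 := (hXm a₀ (hA₁sub ha₀)).1 hxB
    have h2 := (hXm a₀ (hA₁sub ha₀)).2 hxD
    exact Rs_Bs_disj col h1 h2
  have d34 : Disjoint A₃ D := by
    rw [Finset.disjoint_left]
    intro c hc3 hcD
    have h := (hZm c (hA₃sub hc3)).2 hcD
    rw [mem_Rs] at h
    exact h.1 rfl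
  refine ⟨A₁, B, A₃, D, d12, d13, d14, d23, d24, d34,
    hA₁card, hBcard, hA₃card, hDcard, ?_, ?_, ?_, ?_⟩
  · intro u hu v hv
    have h := (hXm u (hA₁sub hu)).1 hv
    exact ((mem_Rs col).1 h).2
  · intro u hu v hv
    have h := (hZm u (hA₃sub hu)).2 hv
    exact ((mem_Rs col).1 h).2
  · intro u hu v hv
    have h := (hZm v (hA₃sub hv)).1 hu
    rw [hsym u v]
    exact ((mem_Bs col).1 h).2
  · intro u hu v hv
    have h := (hXm v (hA₁sub hv)).2 hu
    rw [hsym u v]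
    exact ((mem_Bs col).1 h).2
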